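/- Let F be an algebraically closed field and let S be a pairwise commuting subset of GL(n, F). Then there exists C ∈ GL(n, F) such that CAC⁻¹ is upper triangular for every A ∈ S. -/

import Mathlib

open Module Submodule

open Module Submodule

lemma exists_common_eigenvector {F : Type} [Field F] [IsAlgClosed F] :
    ∀ (d : ℕ) (V : Type) [AddCommGroup V] [Module F V] [FiniteDimensional F V],
      Module.finrank F V = d → 0 < d →
      ∀ T : Set (Module.End F V), (∀ f ∈ T, ∀ g ∈ T, Commute f g) →
      ∃ v : V, v ≠ 0 ∧ ∀ f ∈ T, ∃ μ : F, f v = μ • v := by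
  intro d
  induction d using Nat.strong_induction_on with
  | _ d ih =>
    intro V _ _ _ hd hpos T hT
    have hnt : Nontrivial V := by
      rw [← Module.finrank_pos_iff (R := F)]; omega
    by_cases h : ∃ f ∈ T, ∃ μ : F, Module.End.eigenspace f μ ≠ ⊥ ∧ Module.End.eigenspace f μ ≠ ⊤
    · obtain ⟨f, hf, μ, hne, hne'⟩ := h
      set E := Module.End.eigenspace f μ with hE
      have hmaps : ∀ g ∈ T, ∀ x ∈ E, g x ∈ E := by
        intro g hg x hx
        rw [hE, Module.End.mem_eigenspace_iff] at hx ⊢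
        have := DFunLike.congr_fun (hT f hf g hg) x
        simp only [Module.End.mul_apply] at this
        rw [this, hx, map_smul]
      set T' : Set (Module.End F E) :=
        {g' | ∃ g, ∃ hg : g ∈ T, g' = LinearMap.restrict g (hmaps g hg)} with hT'def
      have hT' : ∀ f' ∈ T', ∀ g' ∈ T', Commute f' g' := by
        rintro _ ⟨g₁, hg₁, rfl⟩ _ ⟨g₂, hg₂, rfl⟩
        ext x
        have := DFunLike.congr_fun (hT g₁ hg₁ g₂ hg₂) (x : V)
        simp only [Module.End.mul_apply] at this ⊢
        simpa [LinearMap.restrict_apply] using this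
      have hEnt : Nontrivial E := Submodule.nontrivial_iff_ne_bot.mpr hne
      have hlt : finrank F E < d := hd ▸ Submodule.finrank_lt hne'
      have hEpos : 0 < finrank F E := finrank_pos
      obtain ⟨v, hv0, hv⟩ := ih (finrank F E) hlt E rfl hEpos T' hT'
      refine ⟨(v : V), by simpa using hv0, ?_⟩
      intro g hg
      obtain ⟨ν, hν⟩ := hv (LinearMap.restrict g (hmaps g hg)) ⟨g, hg, rfl⟩
      exact ⟨ν, by simpa [LinearMap.restrict_apply] using congrArg (Subtype.val) hν⟩
    · push_neg at h
      obtain ⟨v, hv⟩ := exists_ne (0 : V)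
      refine ⟨v, hv, fun f hf => ?_⟩
      obtain ⟨μ, hμ⟩ := Module.End.exists_eigenvalue f
      have := h f hf μ (by exact hμ)
      exact ⟨μ, Module.End.mem_eigenspace_iff.mp (this ▸ Submodule.mem_top)⟩

lemma exists_triangular_basis {F : Type} [Field F] [IsAlgClosed F] :
    ∀ (d : ℕ) (V : Type) [AddCommGroup V] [Module F V] [FiniteDimensional F V],
      Module.finrank F V = d →
      ∀ T : Set (Module.End F V), (∀ f ∈ T, ∀ g ∈ T, Commute f g) →
      ∃ b : Basis (Fin d) F V,
        ∀ f ∈ T, ∀ j, f (b j) ∈ span F (b '' {k | k ≤ j}) := by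
  intro d
  induction d with
  | zero =>
    intro V _ _ _ hd T hT
    have : Subsingleton V := (Module.finrank_zero_iff (R := F)).mp hd
    exact ⟨Basis.empty V, fun f hf j => j.elim0⟩
  | succ d ih =>
    intro V _ _ _ hd T hT
    obtain ⟨v, hv0, hv⟩ := exists_common_eigenvector (d + 1) V hd (Nat.succ_pos d) T hT
    set W : Submodule F V := span F {v} with hWdef
    have hvW : v ∈ W := mem_span_singleton_self v
    have hmaps : ∀ g ∈ T, ∀ x ∈ W, g x ∈ W := by
      intro g hg x hx
      obtain ⟨μ, hμ⟩ := hv g hg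
      obtain ⟨c, rfl⟩ := mem_span_singleton.mp hx
      rw [map_smul, hμ]
      exact smul_mem _ _ (smul_mem _ _ hvW)
    -- the quotient
    have hWr : finrank F W = 1 := finrank_span_singleton hv0
    have hQr : finrank F (V ⧸ W) = d := by
      have := Submodule.finrank_quotient_add_finrank W
      omega
    set T' : Set (Module.End F (V ⧸ W)) :=
      {g' | ∃ g, ∃ hg : g ∈ T, g' = Submodule.mapQ W W g (hmaps g hg)} with hT'def
    have hT' : ∀ f' ∈ T', ∀ g' ∈ T', Commute f' g' := by
      rintro _ ⟨g₁, hg₁, rfl⟩ _ ⟨g₂, hg₂, rfl⟩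
      unfold Commute SemiconjBy
      apply Submodule.linearMap_qext
      ext x
      have := DFunLike.congr_fun (hT g₁ hg₁ g₂ hg₂) x
      simp only [Module.End.mul_apply] at this
      simp [Submodule.mapQ_apply, Module.End.mul_apply, this]
    obtain ⟨c, hc⟩ := ih (V ⧸ W) hQr T' hT'
    -- lift the basis
    choose u hu using fun i => Submodule.mkQ_surjective W (c i)
    set b' : Fin (d + 1) → V := Fin.cons v u with hb'def
    have hb'0 : b' 0 = v := rfl
    have hb's : ∀ i, b' i.succ = u i := fun i => rfl
    have hli : LinearIndependent F b' := by
      rw [Fintype.linearIndependent_iff]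
      intro g hg
      have hq : ∑ i : Fin d, g i.succ • c i = 0 := by
        have := congrArg W.mkQ hg
        rw [map_sum, map_zero] at this
        rw [Fin.sum_univ_succ] at this
        simp only [map_smul, hb'0, hb's, hu, Submodule.mkQ_apply] at this
        rwa [(Submodule.Quotient.mk_eq_zero W).mpr hvW, smul_zero, zero_add] at this
      have hzs : ∀ i : Fin d, g i.succ = 0 :=
        Fintype.linearIndependent_iff.mp c.linearIndependent _ hq
      have h0 : g 0 = 0 := by
        rw [Fin.sum_univ_succ] at hg
        simp only [hzs, zero_smul, Finset.sum_const_zero, add_zero, hb'0] at hg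
        exact (smul_eq_zero.mp hg).resolve_right hv0
      intro i
      refine Fin.cases h0 hzs i
    have hcard : Fintype.card (Fin (d + 1)) = finrank F V := by simp [hd]
    let b : Basis (Fin (d + 1)) F V := basisOfLinearIndependentOfCardEqFinrank hli hcard
    have hb : ⇑b = b' := coe_basisOfLinearIndependentOfCardEqFinrank hli hcard
    refine ⟨b, ?_⟩
    intro f hf j
    rw [hb]
    refine Fin.cases ?_ ?_ j
    · obtain ⟨μ, hμ⟩ := hv f hf
      rw [hb'0, hμ]
      exact smul_mem _ _ (subset_span ⟨0, by simp, hb'0⟩)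
    · intro i
      have hmem : W.mkQ (f (u i)) ∈ span F (c '' {k | k ≤ i}) := by
        have h1 : Submodule.mapQ W W f (hmaps f hf) (c i) ∈ span F (c '' {k | k ≤ i}) :=
          hc _ ⟨f, hf, rfl⟩ i
        rw [← hu i, Submodule.mkQ_apply, Submodule.mapQ_apply] at h1
        rwa [Submodule.mkQ_apply]
      have himg : c '' {k | k ≤ i} = W.mkQ '' (b' '' (Fin.succ '' {k | k ≤ i})) := by
        rw [Set.image_image, Set.image_image]
        exact Set.image_congr fun k _ => by rw [hb's, hu]
      rw [himg, ← Submodule.map_span] at hmem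
      have : f (u i) ∈ span F (b' '' (Fin.succ '' {k | k ≤ i})) ⊔ W := by
        have h2 : f (u i) ∈ Submodule.comap W.mkQ
            (Submodule.map W.mkQ (span F (b' '' (Fin.succ '' {k | k ≤ i})))) := hmem
        rwa [Submodule.comap_map_eq, Submodule.ker_mkQ] at h2
      refine (sup_le ?_ ?_ : _ ⊔ W ≤ span F (b' '' {k | k ≤ i.succ})) this
      · exact span_mono (Set.image_mono (by
          rintro _ ⟨k, hk, rfl⟩; exact Fin.succ_le_succ_iff.mpr hk))
      · rw [hWdef, span_le]
        rintro _ rfl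
        exact subset_span ⟨0, Fin.zero_le _, hb'0⟩

/-- A pairwise commuting subset of `GL(n, F)`, `F` algebraically closed, is
simultaneously upper triangularizable. -/
theorem simultaneous_upper_triangularization
    (F : Type) [Field F] [IsAlgClosed F] (n : ℕ) (S : Set (GL (Fin n) F))
    (hcomm : ∀ A ∈ S, ∀ B ∈ S, Commute A B) :
    ∃ C : GL (Fin n) F, ∀ A ∈ S,
      ∀ i j : Fin n, j < i → (↑(C * A * C⁻¹) : Matrix (Fin n) (Fin n) F) i j = 0 := by
  set T : Set (Module.End F (Fin n → F)) :=
    {f | ∃ A ∈ S, f = Matrix.toLin' (A : Matrix (Fin n) (Fin n) F)} with hTdef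
  have hT : ∀ f ∈ T, ∀ g ∈ T, Commute f g := by
    rintro _ ⟨A, hA, rfl⟩ _ ⟨B, hB, rfl⟩
    have h : (A : Matrix (Fin n) (Fin n) F) * B = (B : Matrix (Fin n) (Fin n) F) * A := by
      have := hcomm A hA B hB
      exact_mod_cast congrArg Units.val this
    show Matrix.toLin' _ * Matrix.toLin' _ = Matrix.toLin' _ * Matrix.toLin' _
    rw [Module.End.mul_eq_comp, Module.End.mul_eq_comp, ← Matrix.toLin'_mul,
      ← Matrix.toLin'_mul, h]
  obtain ⟨b, hb⟩ := exists_triangular_basis n (Fin n → F)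
    (Module.finrank_fin_fun F) T hT
  set e : Basis (Fin n) F (Fin n → F) := Pi.basisFun F (Fin n) with hedef
  have hinv : b.toMatrix e * e.toMatrix b = 1 := Basis.toMatrix_mul_toMatrix_flip b e
  have hinv' : e.toMatrix b * b.toMatrix e = 1 := Basis.toMatrix_mul_toMatrix_flip e b
  let C : GL (Fin n) F := ⟨b.toMatrix e, e.toMatrix b, hinv, hinv'⟩
  have hC : (C : Matrix (Fin n) (Fin n) F) = b.toMatrix e := rfl
  have hCi : ((C⁻¹ : GL (Fin n) F) : Matrix (Fin n) (Fin n) F) = e.toMatrix b := rfl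
  refine ⟨C, ?_⟩
  rintro A hA i j hij
  have key : (C : Matrix (Fin n) (Fin n) F) * A * (C⁻¹ : GL (Fin n) F) =
      LinearMap.toMatrix b b (Matrix.toLin' (A : Matrix (Fin n) (Fin n) F)) := by
    have h1 : LinearMap.toMatrix e e (Matrix.toLin' (A : Matrix (Fin n) (Fin n) F)) =
        (A : Matrix (Fin n) (Fin n) F) := by
      rw [hedef, LinearMap.toMatrix_eq_toMatrix', LinearMap.toMatrix'_toLin']
    calc (C : Matrix (Fin n) (Fin n) F) * A * (C⁻¹ : GL (Fin n) F)
        = b.toMatrix e * LinearMap.toMatrix e e (Matrix.toLin' (A : Matrix (Fin n) (Fin n) F))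
            * e.toMatrix b := by rw [h1, hC, hCi]
      _ = _ := basis_toMatrix_mul_linearMap_toMatrix_mul_basis_toMatrix b e b e _
  have hmem : Matrix.toLin' (A : Matrix (Fin n) (Fin n) F) (b j) ∈ span F (b '' {k | k ≤ j}) :=
    hb _ ⟨A, hA, rfl⟩ j
  have hsupp := Basis.repr_support_subset_of_mem_span b _ hmem
  have hrepr : b.repr (Matrix.toLin' (A : Matrix (Fin n) (Fin n) F) (b j)) i = 0 := by
    by_contra hne
    exact absurd (hsupp (Finsupp.mem_support_iff.mpr hne)) (not_le.mpr hij)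
  show (↑(C * A * C⁻¹) : Matrix (Fin n) (Fin n) F) i j = 0
  rw [Units.val_mul, Units.val_mul, key, LinearMap.toMatrix_apply, hrepr]
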